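/- arXiv:1807.01286 — 3 statements merged into one kernel-verified Lean document; each statement's English description precedes it below -/
import Mathlib

section
/- Let u, v : ℝ → ℝ with u bounded by M and v bounded by M and v L-Lipschitz, let ε ∈ (0,1], α ∈ (0,1], and define Φ(x,y) = u(x) - v(y) - (x-y)²/(2√ε) - C(x-y) - α(x² + y²) where |C| ≤ L + 1. If (x̄,ȳ) is a global maximum of Φ over (-∞,0]², then there is a constant K depending only on M and L (not on ε, α, C) such that α(x̄² + ȳ²) + (x̄-ȳ)²/(2√ε) ≤ K. -/
/-- Uniform bound on the penalization terms at a maximum of the doubled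
functional, with constant depending only on `M` and `L`. -/
theorem doubling_penalization_bound
    (M L : ℝ) (hM : 0 ≤ M) (hL : 0 ≤ L) :
    ∃ K : ℝ, ∀ (u v : ℝ → ℝ) (ε α C xb yb : ℝ),
      (∀ x, |u x| ≤ M) → (∀ x, |v x| ≤ M) →
      (∀ x y, |v x - v y| ≤ L * |x - y|) →
      ε ∈ Set.Ioc (0:ℝ) 1 → α ∈ Set.Ioc (0:ℝ) 1 → |C| ≤ L + 1 →
      xb ∈ Set.Iic (0:ℝ) → yb ∈ Set.Iic (0:ℝ) →
      (∀ x ∈ Set.Iic (0:ℝ), ∀ y ∈ Set.Iic (0:ℝ),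
        u x - v y - (x - y)^2 / (2 * Real.sqrt ε) - C * (x - y)
          - α * (x^2 + y^2) ≤
        u xb - v yb - (xb - yb)^2 / (2 * Real.sqrt ε) - C * (xb - yb)
          - α * (xb^2 + yb^2)) →
      α * (xb^2 + yb^2) + (xb - yb)^2 / (2 * Real.sqrt ε) ≤ K := by
  refine ⟨8 * M + 2 * (L + 1)^2, ?_⟩
  intro u v ε α C xb yb hu hv hvL hε hα hC hxb hyb hmax
  have hε0 : 0 < ε := hε.1
  have hε1 : ε ≤ 1 := hε.2
  set s := Real.sqrt ε with hs
  have hs0 : 0 < s := Real.sqrt_pos.mpr hε0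
  have hs1 : s ≤ 1 := by
    rw [hs, show (1:ℝ) = Real.sqrt 1 by simp]
    exact Real.sqrt_le_sqrt hε1
  have key := hmax 0 (Set.self_mem_Iic) 0 (Set.self_mem_Iic)
  simp only [sub_zero, zero_sub, ne_eq] at key
  -- key : u 0 - v 0 - 0 - 0 - 0 ≤ ...
  have h4M : u xb - v yb - (u 0 - v 0) ≤ 4 * M := by
    have h1 := (abs_le.mp (hu xb)).2
    have h2 := (abs_le.mp (hv yb)).1
    have h3 := (abs_le.mp (hu 0)).1
    have h4 := (abs_le.mp (hv 0)).2
    linarith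
  have hCd : C * (xb - yb) ≥ -((L + 1) * |xb - yb|) := by
    have := abs_mul C (xb - yb)
    have h1 : |C * (xb - yb)| ≤ (L + 1) * |xb - yb| := by
      rw [this]; exact mul_le_mul_of_nonneg_right hC (abs_nonneg _)
    linarith [(abs_le.mp h1).1]
  have hyoung : (L + 1) * |xb - yb| ≤ (xb - yb)^2 / (4 * s) + (L + 1)^2 * s := by
    rw [div_add' _ _ _ (by positivity), le_div_iff₀ (by positivity)]
    have h2 : |xb - yb|^2 = (xb - yb)^2 := sq_abs _
    nlinarith [sq_nonneg (|xb - yb| - 2 * s * (L + 1)), abs_nonneg (xb - yb)]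
  have hbase : α * (xb^2 + yb^2) + (xb - yb)^2 / (2 * s) ≤
      4 * M + (xb - yb)^2 / (4 * s) + (L + 1)^2 * s := by
    have h0 : u 0 - v 0 - 0^2/(2*s) - C * 0 - α * 0 ≤
        u xb - v yb - (xb - yb)^2 / (2 * s) - C * (xb - yb) - α * (xb^2 + yb^2) := by
      simpa using hmax 0 (Set.self_mem_Iic) 0 (Set.self_mem_Iic)
    have hz : (0:ℝ)^2/(2*s) = 0 := by simp
    linarith [hCd]
  have hhalf : (xb - yb)^2 / (2 * s) = 2 * ((xb - yb)^2 / (4 * s)) := by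
    field_simp; ring
  have hq : 0 ≤ (xb - yb)^2 / (4 * s) := by positivity
  have hαnn : 0 ≤ α * (xb^2 + yb^2) := by
    have := hα.1.le; positivity
  have hsle : (L + 1)^2 * s ≤ (L + 1)^2 := by nlinarith
  -- from hbase: α(..) + (d²/(4s)) ≤ 4M + (L+1)²
  nlinarith
end

section
/- Let I = (-∞, 0], let F : I × ℝ × ℝ → ℝ be continuous, and let u : I → ℝ be upper semi-continuous and a viscosity subsolution of F(x, u, u') ≤ 0 on (-∞, 0) (i.e., whenever ψ is C¹ and u - ψ has a local maximum at an interior point x, F(x, u(x), ψ'(x)) ≤ 0). Let ξ ∈ J⁺u(0) (the one-sided superdifferential at 0, taken from the left) and set λ₀ = sup{λ ≥ 0 : ξ + λ ∈ J⁺u(0)}. If λ₀ < ∞, then F(0, u(0), ξ + λ₀) ≤ 0. -/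
set_option maxHeartbeats 1000000

open Set

/-- An upper semicontinuous function on a nonempty compact set attains its maximum. -/
lemma usc_exists_max {g : ℝ → ℝ} {K : Set ℝ} (hK : IsCompact K) (hne : K.Nonempty)
    (hg : UpperSemicontinuousOn g K) : ∃ x ∈ K, ∀ z ∈ K, g z ≤ g x := by
  by_contra h
  push_neg at h
  choose! y hyK hy using h
  have hopen : ∀ x ∈ K, ∃ O : Set ℝ, IsOpen O ∧ x ∈ O ∧ ∀ z ∈ O ∩ K, g z < g (y x) := by
    intro x hx
    have h1 := hg x hx (g (y x)) (hy x hx)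
    rw [eventually_nhdsWithin_iff, eventually_nhds_iff] at h1
    obtain ⟨O, hO1, hO2, hO3⟩ := h1
    exact ⟨O, hO2, hO3, fun z hz => hO1 z hz.1 hz.2⟩
  choose! O hOopen hxO hO using hopen
  obtain ⟨t, htK, hcover⟩ := hK.elim_nhds_subcover O
    (fun x hx => (hOopen x hx).mem_nhds (hxO x hx))
  have htne : t.Nonempty := by
    obtain ⟨z, hz⟩ := hne
    obtain ⟨x, hx, _⟩ := Set.mem_iUnion₂.mp (hcover hz)
    exact ⟨x, hx⟩
  obtain ⟨b, hb, hbmax⟩ := t.exists_max_image (fun x => g (y x)) htne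
  have hybK : y b ∈ K := hyK b (htK b hb)
  obtain ⟨x₁, hx₁t, hx₁⟩ := Set.mem_iUnion₂.mp (hcover hybK)
  have h2 : g (y b) < g (y x₁) := hO x₁ (htK x₁ hx₁t) (y b) ⟨hx₁, hybK⟩
  exact absurd (hbmax x₁ hx₁t) (not_le.mpr h2)

/-- Lemma on maximal slopes: if `u` is a viscosity subsolution of
`F(x,u,u') ≤ 0` on `(-∞,0)`, `ξ ∈ J⁺u(0)`, and
`λ₀ = sup {λ ≥ 0 : ξ + λ ∈ J⁺u(0)}` is finite, then
`F(0, u(0), ξ + λ₀) ≤ 0`. -/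
theorem maximal_slope_lemma
    (F : ℝ → ℝ → ℝ → ℝ) (u : ℝ → ℝ) (ξ : ℝ)
    (superjet : ℝ → Prop)
    (hsuperjet : ∀ p, superjet p ↔
      ∀ ε > 0, ∃ δ > 0, ∀ y, -δ < y → y ≤ 0 →
        u y ≤ u 0 + p * y + ε * |y|)
    (hF : Continuous fun q : ℝ × ℝ × ℝ => F q.1 q.2.1 q.2.2)
    (husc : UpperSemicontinuousOn u (Set.Iic 0))
    (hsub : ∀ ψ : ℝ → ℝ, ContDiff ℝ 1 ψ → ∀ x < (0:ℝ),
      IsLocalMax (fun z => u z - ψ z) x → F x (u x) (deriv ψ x) ≤ 0)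
    (hξ : superjet ξ)
    (hbdd : BddAbove {l : ℝ | 0 ≤ l ∧ superjet (ξ + l)}) :
    F 0 (u 0) (ξ + sSup {l : ℝ | 0 ≤ l ∧ superjet (ξ + l)}) ≤ 0 := by
  set S := {l : ℝ | 0 ≤ l ∧ superjet (ξ + l)} with hSdef
  have h0S : (0 : ℝ) ∈ S := ⟨le_refl 0, by simpa using hξ⟩
  have hSne : S.Nonempty := ⟨0, h0S⟩
  set lam := sSup S with hlamdef
  have hlam0 : 0 ≤ lam := le_csSup hbdd h0S
  set p₀ := ξ + lam with hp₀def
  -- Step B : p₀ satisfies the superjet estimate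
  have hp₀ : ∀ ε > 0, ∃ δ > 0, ∀ y, -δ < y → y ≤ 0 →
      u y ≤ u 0 + p₀ * y + ε * |y| := by
    intro ε hε
    obtain ⟨l, hlS, hl⟩ := exists_lt_of_lt_csSup hSne (show lam - ε/2 < lam by linarith)
    obtain ⟨δ, hδ, hδ'⟩ := (hsuperjet (ξ + l)).mp hlS.2 (ε/2) (by linarith)
    refine ⟨δ, hδ, fun y hy1 hy2 => ?_⟩
    have h1 := hδ' y hy1 hy2
    have hle : l ≤ lam := le_csSup hbdd hlS
    have hay : |y| = -y := abs_of_nonpos hy2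
    nlinarith [mul_le_mul_of_nonneg_right (show lam - l ≤ ε/2 by linarith) (abs_nonneg y)]
  -- Step C : p₀ + ε fails the superjet estimate for every ε > 0
  have hnot : ∀ ε > 0, ¬ (∀ ε' > 0, ∃ δ > 0, ∀ y, -δ < y → y ≤ 0 →
      u y ≤ u 0 + (p₀ + ε) * y + ε' * |y|) := by
    intro ε hε hcon
    have hmem : lam + ε ∈ S := by
      refine ⟨by linarith, (hsuperjet _).mpr ?_⟩
      have : ξ + (lam + ε) = p₀ + ε := by rw [hp₀def]; ring
      rw [this]; exact hcon
    have := le_csSup hbdd hmem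
    linarith
  -- Suppose for contradiction F 0 (u 0) p₀ > 0
  by_contra hpos
  push_neg at hpos
  have hcontF := hF.continuousAt (x := ((0:ℝ), u 0, p₀))
  rw [Metric.continuousAt_iff] at hcontF
  obtain ⟨r, hr, hball⟩ := hcontF (F 0 (u 0) p₀) hpos
  -- choose ε small
  have hden : (0:ℝ) < |p₀| + 12 := by positivity
  set ε := min 1 (r / (|p₀| + 12)) with hεdef
  have hε : 0 < ε := lt_min one_pos (by positivity)
  have hε1 : ε ≤ 1 := min_le_left _ _
  have hεr : ε ≤ r / (|p₀| + 12) := min_le_right _ _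
  have hεr' : ε * (|p₀| + 12) ≤ r := (le_div_iff₀ hden).mp hεr
  clear hεdef hεr
  clear_value ε
  clear hp₀def hlamdef hSdef h0S hSne hbdd
  clear_value p₀ lam S
  -- superjet estimate for p₀ with this ε
  obtain ⟨δ₀, hδ₀, hb⟩ := hp₀ ε hε
  -- failure of the estimate for p₀ + ε
  have hfail := hnot ε hε
  push_neg at hfail
  obtain ⟨ε₁, hε₁, hwit⟩ := hfail
  set δ := min δ₀ ε / 2 with hδdef
  have hδpos : 0 < δ := by positivity
  have hδδ₀ : δ < δ₀ := by
    have : min δ₀ ε ≤ δ₀ := min_le_left _ _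
    rw [hδdef]; linarith
  have hδε : δ ≤ ε / 2 := by
    have : min δ₀ ε ≤ ε := min_le_right _ _
    rw [hδdef]; linarith
  set K := 3 * ε / δ with hKdef
  have hKpos : 0 < K := by positivity
  have hKδ : K * δ = 3 * ε := by rw [hKdef]; exact div_mul_cancel₀ _ hδpos.ne'
  clear hδdef hKdef
  clear_value δ K
  set ψ := fun y : ℝ => (p₀ + ε) * y + K * y ^ 2 with hψdef
  have hψC : ContDiff ℝ 1 ψ := by
    apply ContDiff.add
    · exact contDiff_const.mul contDiff_id
    · exact contDiff_const.mul (contDiff_id.pow 2)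
  have hψderiv : ∀ x : ℝ, deriv ψ x = (p₀ + ε) + K * (2 * x) := by
    intro x
    have h1 : HasDerivAt (fun y : ℝ => (p₀ + ε) * y) ((p₀ + ε) * 1) x :=
      (hasDerivAt_id x).const_mul (p₀ + ε)
    have h2 : HasDerivAt (fun y : ℝ => K * y ^ 2) (K * (2 * x ^ 1)) x :=
      (hasDerivAt_pow 2 x).const_mul K
    have := (h1.add h2).deriv
    rw [hψdef]; exact this.trans (by ring)
  set g := fun z : ℝ => u z - ψ z with hgdef
  -- g is usc on [-δ, 0]
  have hgusc : UpperSemicontinuousOn g (Icc (-δ) 0) := by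
    have h1 : UpperSemicontinuousOn u (Icc (-δ) 0) :=
      husc.mono (fun z hz => hz.2)
    have h2 : UpperSemicontinuousOn (fun z => -ψ z) (Icc (-δ) 0) := by
      apply ContinuousOn.upperSemicontinuousOn
      exact (hψC.continuous.neg).continuousOn
    have := h1.add h2
    simpa [hgdef, sub_eq_add_neg] using this
  -- maximum of g on [-δ, 0]
  obtain ⟨x, hxI, hxmax⟩ := usc_exists_max isCompact_Icc
    (nonempty_Icc.mpr (by linarith)) hgusc
  -- interior witness with g y > u 0
  set δ' := min δ (ε₁ / K) with hδ'def
  have hδ'pos : 0 < δ' := lt_min hδpos (by positivity)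
  obtain ⟨y, hy1, hy2, hy3⟩ := hwit δ' hδ'pos
  have hyne : y ≠ 0 := by
    intro h; rw [h] at hy3; simp at hy3
  have hyneg : y < 0 := lt_of_le_of_ne hy2 hyne
  have hay : |y| = -y := abs_of_nonpos hy2
  have hyδ : -δ ≤ y := by
    have : δ' ≤ δ := min_le_left _ _
    linarith
  have hyK : K * y ^ 2 < ε₁ * |y| := by
    have h1 : |y| < ε₁ / K := by
      have : δ' ≤ ε₁ / K := min_le_right _ _
      rw [hay]; linarith
    have h2 : 0 < |y| := by rw [hay]; linarith
    calc K * y ^ 2 = K * |y| * |y| := by rw [hay]; ring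
    _ < K * (ε₁ / K) * |y| := by
        apply mul_lt_mul_of_pos_right _ h2
        exact mul_lt_mul_of_pos_left h1 hKpos
    _ = ε₁ * |y| := by field_simp
  have hgy : u 0 < g y := by
    simp only [hgdef, hψdef]
    nlinarith [hy3]
  have hgx : u 0 < g x := lt_of_lt_of_le hgy (hxmax y ⟨hyδ, hy2⟩)
  -- x is not an endpoint
  have hg0 : g 0 = u 0 := by simp [hgdef, hψdef]
  have hxne0 : x ≠ 0 := by
    intro h; rw [h, hg0] at hgx; exact lt_irrefl _ hgx
  have hgδ : g (-δ) < u 0 := by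
    have hub : u (-δ) ≤ u 0 + p₀ * (-δ) + ε * |(-δ)| := by
      apply hb (-δ) (by linarith) (by linarith)
    have haδ : |(-δ)| = δ := by rw [abs_neg, abs_of_pos hδpos]
    rw [haδ] at hub
    simp only [hgdef, hψdef]
    nlinarith [hKδ]
  have hxneδ : x ≠ -δ := by
    intro h; rw [h] at hgx; linarith
  have hxlt0 : x < 0 := lt_of_le_of_ne hxI.2 hxne0
  have hxgtδ : -δ < x := lt_of_le_of_ne hxI.1 (Ne.symm hxneδ)
  -- local max, apply subsolution
  have hloc : IsLocalMax g x := by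
    have hmem : Icc (-δ) 0 ∈ nhds x := Icc_mem_nhds hxgtδ hxlt0
    exact Filter.eventually_of_mem hmem hxmax
  have hFle : F x (u x) (deriv ψ x) ≤ 0 := hsub ψ hψC x hxlt0 hloc
  rw [hψderiv x] at hFle
  -- now derive the contradiction via continuity of F
  have hax : |x| = -x := abs_of_nonpos (le_of_lt hxlt0)
  have haxδ : |x| < δ := by rw [hax]; linarith
  -- bounds on u x
  have hux_ub : u x ≤ u 0 + p₀ * x + ε * |x| := hb x (by linarith) (le_of_lt hxlt0)
  have hux_lb : u 0 + (p₀ + ε) * x + K * x ^ 2 < u x := by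
    have := hgx
    simp only [hgdef, hψdef] at this
    linarith
  clear hgdef hψdef hψC hψderiv hgusc hloc hgy hgx hg0 hgδ hxmax
  clear_value ψ g
  have hp₀x : |p₀ * x| ≤ |p₀| * δ := by
    rw [abs_mul]
    exact mul_le_mul_of_nonneg_left (le_of_lt haxδ) (abs_nonneg p₀)
  have hKx2 : K * x ^ 2 ≤ 3 * ε * δ := by
    have h1 : x ^ 2 ≤ δ ^ 2 := by nlinarith
    calc K * x ^ 2 ≤ K * δ ^ 2 := by nlinarith
    _ = 3 * ε * δ := by rw [sq]; rw [← mul_assoc, hKδ]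
  have habs_p₀ : -(|p₀|) ≤ p₀ ∧ p₀ ≤ |p₀| := ⟨neg_abs_le p₀, le_abs_self p₀⟩
  have hδε' : δ ≤ ε := by linarith
  -- |u x - u 0| < r
  have huxr : |u x - u 0| < r := by
    rw [abs_lt]
    constructor
    · -- lower bound : u x - u 0 > -(r)
      have h1 : (p₀ + ε) * x ≥ -((|p₀| + ε) * δ) := by
        have := abs_mul (p₀ + ε) x
        have h2 : |(p₀ + ε) * x| ≤ (|p₀| + ε) * δ := by
          rw [abs_mul]
          apply mul_le_mul (by calc |p₀ + ε| ≤ |p₀| + |ε| := abs_add_le _ _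
            _ = |p₀| + ε := by rw [abs_of_pos hε]) (le_of_lt haxδ) (abs_nonneg x) (by positivity)
        linarith [neg_abs_le ((p₀ + ε) * x)]
      have h3 : K * x ^ 2 ≥ 0 := by positivity
      have h4 : u x - u 0 > -((|p₀| + ε) * δ) := by nlinarith [hux_lb]
      have h5 : (|p₀| + ε) * δ ≤ (|p₀| + 1) * ε :=
        mul_le_mul (by linarith) hδε' (le_of_lt hδpos) (by positivity)
      have h6 : (|p₀| + 1) * ε < r := by nlinarith [abs_nonneg p₀]
      linarith
    · -- upper bound
      have h1 : p₀ * x ≤ |p₀| * δ := by linarith [neg_abs_le (p₀ * x), le_abs_self (p₀ * x), hp₀x]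
      have h2 : u x - u 0 ≤ |p₀| * δ + ε * δ := by nlinarith [hux_ub]
      have h3 : |p₀| * δ + ε * δ ≤ (|p₀| + 1) * ε := by nlinarith [abs_nonneg p₀]
      have h4 : (|p₀| + 1) * ε < r := by nlinarith [abs_nonneg p₀]
      linarith
  -- |deriv - p₀| < r
  have hderivr : |(p₀ + ε) + K * (2 * x) - p₀| < r := by
    have h1 : |K * (2 * x)| ≤ 2 * (3 * ε) := by
      rw [abs_mul, abs_of_pos hKpos, abs_mul]
      have : |(2:ℝ)| = 2 := by norm_num
      rw [this]
      calc K * (2 * |x|) ≤ K * (2 * δ) := by nlinarith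
      _ = 2 * (K * δ) := by ring
      _ = 2 * (3 * ε) := by rw [hKδ]
    have h2 : |(p₀ + ε) + K * (2 * x) - p₀| ≤ ε + 6 * ε := by
      have : (p₀ + ε) + K * (2 * x) - p₀ = ε + K * (2 * x) := by ring
      rw [this]
      calc |ε + K * (2 * x)| ≤ |ε| + |K * (2 * x)| := abs_add_le _ _
      _ ≤ ε + 6 * ε := by rw [abs_of_pos hε]; linarith
    have h3 : 7 * ε < r := by nlinarith [abs_nonneg p₀]
    linarith
  have hxr : |x| < r := by
    have h12 : 12 * ε ≤ r := by nlinarith [mul_nonneg (le_of_lt hε) (abs_nonneg p₀)]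
    linarith
  -- apply the continuity estimate
  have hdist : dist ((x, u x, (p₀ + ε) + K * (2 * x)) : ℝ × ℝ × ℝ) (0, u 0, p₀) < r := by
    rw [Prod.dist_eq, Prod.dist_eq]
    simp only [Real.dist_eq]
    rw [sub_zero]
    exact max_lt hxr (max_lt huxr hderivr)
  have := hball hdist
  simp only [Real.dist_eq] at this
  rw [abs_lt] at this
  linarith [hFle, this.1]
end

section
/- Let u : (-∞,0] → ℝ be upper semi-continuous, ψ : (-∞,0] → ℝ continuous and differentiable at 0, and suppose u - ψ has a strict local maximum at 0 with u(0) = ψ(0). Let δ > 0 be small, set μ(δ) = ψ(-δ) - u(-δ) > 0 and α(δ) = min(δ, μ(δ)/(2δ)), and let x_δ be a maximum point of x ↦ u(x) - ψ(x) - α(δ)x on [-δ, 0]. If ψ'(0) + α(δ) ∉ J⁺u(0), then x_δ ∈ (-δ, 0), i.e., the maximum is attained in the open interval. -/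
/-- If `u - ψ` has a strict local maximum at `0`, `ψ'(0) + α(δ) ∉ J⁺u(0)`, and
`x_δ` maximizes `u - ψ - α(δ)x` on `[-δ,0]`, then `x_δ ∈ (-δ, 0)`. -/
theorem interior_maximum_point
    (u ψ : ℝ → ℝ) (ψ' δ xδ : ℝ)
    (husc : UpperSemicontinuousOn u (Set.Iic 0))
    (hψ : ContinuousOn ψ (Set.Iic 0))
    (hψ' : HasDerivWithinAt ψ ψ' (Set.Iic 0) 0)
    (hδ : 0 < δ)
    (hstrict : ∀ x ∈ Set.Ico (-δ) (0:ℝ), u x - ψ x < u 0 - ψ 0)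
    (heq : u 0 = ψ 0)
    (hμ : 0 < ψ (-δ) - u (-δ))
    (hxδ : xδ ∈ Set.Icc (-δ) 0)
    (hmax : ∀ x ∈ Set.Icc (-δ) (0:ℝ),
      u x - ψ x - min δ ((ψ (-δ) - u (-δ)) / (2*δ)) * x ≤
      u xδ - ψ xδ - min δ ((ψ (-δ) - u (-δ)) / (2*δ)) * xδ)
    (hnotjet : ¬ (∀ ε > 0, ∃ η > 0, ∀ y, -η < y → y ≤ 0 →
      u y ≤ u 0 + (ψ' + min δ ((ψ (-δ) - u (-δ)) / (2*δ))) * y + ε * |y|)) :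
    xδ ∈ Set.Ioo (-δ) 0 := by
  set α := min δ ((ψ (-δ) - u (-δ)) / (2*δ)) with hαdef
  have hαpos : 0 < α := lt_min hδ (by positivity)
  have hαle : α ≤ (ψ (-δ) - u (-δ)) / (2*δ) := min_le_right _ _
  obtain ⟨h1, h2⟩ := hxδ
  constructor
  · rcases lt_or_eq_of_le h1 with h | h
    · exact h
    · exfalso
      have h0 := hmax 0 ⟨by linarith, le_refl 0⟩
      rw [← h] at h0
      have hαδ : α * (2*δ) ≤ ψ (-δ) - u (-δ) :=
        (le_div_iff₀ (by positivity)).mp hαle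
      nlinarith [h0, hαδ]
  · rcases lt_or_eq_of_le h2 with h | h
    · exact h
    · exfalso
      apply hnotjet
      intro ε hε
      have hlo := (hasDerivWithinAt_iff_isLittleO.mp hψ').def hε
      obtain ⟨η, hη, hball⟩ := Metric.mem_nhdsWithin_iff.mp hlo
      refine ⟨min η δ, lt_min hη hδ, fun y hy1 hy2 => ?_⟩
      rcases eq_or_lt_of_le hy2 with rfl | hy2'
      · simp
      · have hyη : |y| < η := by
          rw [abs_of_neg hy2']
          have := lt_min_iff.mp (neg_lt.mp hy1)
          linarith [this.1]
        have hyδ : -δ ≤ y := by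
          have := lt_min_iff.mp (neg_lt.mp hy1)
          linarith [this.2]
        have hb := hball ⟨by simpa [Metric.mem_ball, Real.dist_eq, abs_sub_comm] using hyη, hy2⟩
        simp only [smul_eq_mul, sub_zero] at hb
        have hb2 : |ψ y - ψ 0 - y * ψ'| ≤ ε * |y| := by
          simpa [Real.norm_eq_abs] using hb
        have hb' : ψ y - ψ 0 - y * ψ' ≤ ε * |y| :=
          le_trans (le_abs_self _) hb2
        have hm := hmax y ⟨hyδ, hy2⟩
        rw [h] at hm
        simp only [mul_zero, sub_zero] at hm
        have : u y - ψ y - α * y ≤ u 0 - ψ 0 := hm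
        nlinarith [this, hb']
end
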